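/- Let W ⊊ ±[1,m] and 1 ≤ k ≤ m. The number of k-element subsets V ⊆ ±[1,m] with V ∩ W = ∅ and V free of opposites equals the sum over 0 ≤ j ≤ k of C(|W ∪ (-W)| - |W|, j)·C(m - |W ∪ (-W)|/2, k-j)·2^{k-j}. -/

import Mathlib

open scoped Classical

/-- The set ±[1,m] = {-m,…,-1,1,…,m} of nonzero integers of absolute value at most m. -/
noncomputable def pmSet (m : ℕ) : Finset ℤ := (Finset.Icc (-(m : ℤ)) (m : ℤ)).erase 0

lemma card_symm_finset (X : Finset ℤ) (h0 : (0:ℤ) ∉ X) (hneg : ∀ x ∈ X, -x ∈ X) :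
    X.card = 2 * (X.filter (fun x => 0 < x)).card := by
  have hNP : (X.filter (fun x => x < 0)) = (X.filter (fun x => 0 < x)).image (fun x => -x) := by
    ext x
    simp only [Finset.mem_filter, Finset.mem_image]
    constructor
    · rintro ⟨hx, hx0⟩
      exact ⟨-x, ⟨hneg x hx, by omega⟩, by ring⟩
    · rintro ⟨y, ⟨hy, hy0⟩, rfl⟩
      exact ⟨hneg y hy, by omega⟩
  have hsplit : (X.filter (fun x => 0 < x)).card + (X.filter (fun x => ¬ 0 < x)).card = X.card :=
    Finset.card_filter_add_card_filter_not _
  have hne : (X.filter (fun x => ¬ 0 < x)) = (X.filter (fun x => x < 0)) := by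
    apply Finset.filter_congr
    intro x hx
    have : x ≠ 0 := fun h => h0 (h ▸ hx)
    omega
  have hcardN : (X.filter (fun x => x < 0)).card = (X.filter (fun x => 0 < x)).card := by
    rw [hNP, Finset.card_image_of_injective _ neg_injective]
  rw [hne] at hsplit
  omega

theorem stmt5 (m : ℕ) (hm : 1 ≤ m) (W : Finset ℤ) (hW : W ⊆ pmSet m)
    (hWproper : W ≠ pmSet m) (k : ℕ) (hk1 : 1 ≤ k) (hk2 : k ≤ m) :
    ((pmSet m).powerset.filter
        (fun V => V.card = k ∧ V ∩ W = ∅ ∧ ∀ v ∈ V, -v ∉ V)).card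
      = ∑ j ∈ Finset.range (k + 1),
          ((W ∪ W.image (fun w => -w)).card - W.card).choose j
            * (m - (W ∪ W.image (fun w => -w)).card / 2).choose (k - j) * 2 ^ (k - j) := by
  classical
  set S := pmSet m with hSdef
  set U := W ∪ W.image (fun w => -w) with hUdef
  set A := W.image (fun w => -w) \ W with hAdef
  set F := S \ U with hFdef
  set Pos := F.filter (fun x => 0 < x) with hPosdef
  have hmemS : ∀ x : ℤ, x ∈ S ↔ x ≠ 0 ∧ -(m:ℤ) ≤ x ∧ x ≤ m := by
    intro x
    simp [hSdef, pmSet, Finset.mem_erase, Finset.mem_Icc, and_assoc]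
  have hSneg : ∀ x ∈ S, -x ∈ S := by
    intro x hx
    rw [hmemS] at hx ⊢
    omega
  have hUneg : ∀ x ∈ U, -x ∈ U := by
    intro x hx
    rw [hUdef, Finset.mem_union] at hx ⊢
    rcases hx with hx | hx
    · right; exact Finset.mem_image.2 ⟨x, hx, rfl⟩
    · left
      obtain ⟨w, hw, rfl⟩ := Finset.mem_image.1 hx
      simpa using hw
  have hUS : U ⊆ S := by
    intro x hx
    rw [hUdef, Finset.mem_union] at hx
    rcases hx with hx | hx
    · exact hW hx
    · obtain ⟨w, hw, rfl⟩ := Finset.mem_image.1 hx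
      exact hSneg w (hW hw)
  have hAS : A ⊆ S := fun x hx => hUS (by rw [hUdef]; exact Finset.mem_union_right _ (Finset.mem_sdiff.1 hx).1)
  have hAW : ∀ a ∈ A, a ∉ W := fun a ha => (Finset.mem_sdiff.1 ha).2
  have hAnegW : ∀ a ∈ A, -a ∈ W := by
    intro a ha
    obtain ⟨w, hw, rfl⟩ := Finset.mem_image.1 (Finset.mem_sdiff.1 ha).1
    simpa using hw
  have hFS : F ⊆ S := Finset.sdiff_subset
  have hFU : ∀ x ∈ F, x ∉ U := fun x hx => (Finset.mem_sdiff.1 hx).2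
  have hFW : ∀ x ∈ F, x ∉ W := fun x hx h => hFU x hx (by rw [hUdef]; exact Finset.mem_union_left _ h)
  have hFA : ∀ x ∈ F, x ∉ A := fun x hx h =>
    hFU x hx (by rw [hUdef]; exact Finset.mem_union_right _ (Finset.mem_sdiff.1 h).1)
  have hFneg : ∀ x ∈ F, -x ∈ F := by
    intro x hx
    rw [hFdef, Finset.mem_sdiff] at hx ⊢
    refine ⟨hSneg x hx.1, fun h => hx.2 ?_⟩
    simpa using hUneg _ h
  have hF0 : ∀ x ∈ F, x ≠ 0 := fun x hx => ((hmemS x).1 (hFS hx)).1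
  have hA0 : ∀ x ∈ A, x ≠ 0 := fun x hx => ((hmemS x).1 (hAS hx)).1
  have hAF : ∀ a ∈ A, a ∉ F := fun a ha h => hFA a h ha
  have hAnegA : ∀ a ∈ A, -a ∉ A := fun a ha h => hAW _ h (hAnegW a ha)
  have hSWdecomp : ∀ x, x ∈ S → x ∉ W → (x ∈ A ∨ x ∈ F) := by
    intro x hxS hxW
    by_cases hx : x ∈ U
    · left
      rw [hUdef, Finset.mem_union] at hx
      exact Finset.mem_sdiff.2 ⟨hx.resolve_left (fun h => hxW h), hxW⟩
    · right; exact Finset.mem_sdiff.2 ⟨hxS, hx⟩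
  -- cardinalities
  have hWU : W ⊆ U := by rw [hUdef]; exact Finset.subset_union_left
  have hcardA : A.card = U.card - W.card := by
    have : U \ W = A := by rw [hUdef, Finset.union_sdiff_left]
    rw [← this, Finset.card_sdiff_of_subset hWU]
  have hU0 : (0:ℤ) ∉ U := fun h => ((hmemS 0).1 (hUS h)).1 rfl
  have hUcard : U.card = 2 * (U.filter (fun x => 0 < x)).card :=
    card_symm_finset U hU0 hUneg
  have hcardPos : Pos.card = m - U.card / 2 := by
    have hPosEq : Pos = Finset.Icc (1:ℤ) (m:ℤ) \ (U.filter (fun x => 0 < x)) := by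
      ext x
      simp only [hPosdef, hFdef, Finset.mem_filter, Finset.mem_sdiff, Finset.mem_Icc, hmemS]
      constructor
      · rintro ⟨⟨⟨hx0, hxl, hxu⟩, hxU⟩, hxp⟩
        exact ⟨⟨by omega, hxu⟩, fun h => hxU h.1⟩
      · rintro ⟨⟨hxl, hxu⟩, hxU⟩
        have hp : (0:ℤ) < x := by omega
        exact ⟨⟨⟨by omega, by omega, hxu⟩, fun h => hxU ⟨h, hp⟩⟩, hp⟩
    have hsub : U.filter (fun x => 0 < x) ⊆ Finset.Icc (1:ℤ) (m:ℤ) := by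
      intro x hx
      obtain ⟨hxU, hxp⟩ := Finset.mem_filter.1 hx
      have := (hmemS x).1 (hUS hxU)
      simp only [Finset.mem_Icc]
      omega
    have hIcc : (Finset.Icc (1:ℤ) (m:ℤ)).card = m := by
      rw [Int.card_Icc]
      simp
    rw [hPosEq, Finset.card_sdiff_of_subset hsub, hIcc]
    omega
  -- the main bijection
  have hmain : (S.powerset.filter
        (fun V => V.card = k ∧ V ∩ W = ∅ ∧ ∀ v ∈ V, -v ∉ V)).card
      = ((Finset.range (k+1)).sigma fun j =>
          (A.powersetCard j) ×ˢ ((Pos.powersetCard (k-j)).sigma fun P => P.powerset)).card := by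
    have hPosF : Pos ⊆ F := Finset.filter_subset _ _
    have hPospos : ∀ x ∈ Pos, 0 < x := fun x hx => (Finset.mem_filter.1 hx).2
    apply Finset.card_nbij'
      (i := fun V => ⟨(V ∩ A).card, ((V ∩ A),
        ⟨(V \ A).image (fun x => |x|), ((V \ A).filter (fun x => x < 0)).image (fun x => -x)⟩)⟩)
      (j := fun z => z.2.1 ∪ ((z.2.2.1 \ z.2.2.2) ∪ z.2.2.2.image (fun x => -x)))
    · -- forward membership
      intro V hV
      simp only [Finset.mem_coe, Finset.mem_filter, Finset.mem_powerset] at hV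
      obtain ⟨hVS, hVk, hVW0, hVopp⟩ := hV
      have hVW : ∀ v ∈ V, v ∉ W := by
        intro v hv hvW
        have : v ∈ V ∩ W := Finset.mem_inter.2 ⟨hv, hvW⟩
        rw [hVW0] at this
        exact absurd this (Finset.notMem_empty v)
      have hVAF : V \ A ⊆ F := by
        intro x hx
        obtain ⟨hxV, hxA⟩ := Finset.mem_sdiff.1 hx
        rcases hSWdecomp x (hVS hxV) (hVW x hxV) with h | h
        · exact absurd h hxA
        · exact h
      have hinj : Set.InjOn (fun x : ℤ => |x|) (V \ A : Finset ℤ) := by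
        intro x hx y hy hxy
        simp only [Finset.coe_sdiff, Set.mem_diff, Finset.mem_coe] at hx hy
        rcases abs_eq_abs.1 hxy with h | h
        · exact h
        · exact absurd (h ▸ hx.1) (hVopp y hy.1)
      have hjk : (V ∩ A).card ≤ k := hVk ▸ Finset.card_le_card Finset.inter_subset_left
      have hcardim : ((V \ A).image (fun x => |x|)).card = k - (V ∩ A).card := by
        rw [Finset.card_image_of_injOn hinj]
        have := Finset.card_inter_add_card_sdiff V A
        omega
      have himPos : (V \ A).image (fun x => |x|) ⊆ Pos := by
        intro x hx
        obtain ⟨y, hy, rfl⟩ := Finset.mem_image.1 hx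
        have hyF := hVAF hy
        have hy0 := hF0 y hyF
        rcases lt_trichotomy y 0 with h | h | h
        · rw [abs_of_neg h]
          exact Finset.mem_filter.2 ⟨hFneg y hyF, by omega⟩
        · exact absurd h hy0
        · rw [abs_of_pos h]
          exact Finset.mem_filter.2 ⟨hyF, h⟩
      refine Finset.mem_sigma.2 ⟨Finset.mem_range.2 (show (V ∩ A).card < k + 1 by omega), Finset.mem_product.2
        ⟨Finset.mem_powersetCard.2 ⟨Finset.inter_subset_right, rfl⟩,
         Finset.mem_sigma.2 ⟨Finset.mem_powersetCard.2 ⟨himPos, hcardim⟩,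
           Finset.mem_powerset.2 ?_⟩⟩⟩
      intro x hx
      obtain ⟨y, hy, rfl⟩ := Finset.mem_image.1 hx
      obtain ⟨hyVA, hylt⟩ := Finset.mem_filter.1 hy
      exact Finset.mem_image.2 ⟨y, hyVA, abs_of_neg hylt⟩
    · -- backward membership
      rintro ⟨j, V₁, P, T⟩ ha
      simp only [Finset.mem_coe, Finset.mem_sigma, Finset.mem_product, Finset.mem_powersetCard,
        Finset.mem_powerset, Finset.mem_range] at ha
      obtain ⟨hjk, ⟨hV₁A, hV₁card⟩, ⟨⟨hPPos, hPcard⟩, hTP⟩⟩ := ha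
      dsimp only
      have hPF : P ⊆ F := hPPos.trans hPosF
      have hPpos : ∀ x ∈ P, 0 < x := fun x hx => hPospos x (hPPos hx)
      have hBF : (P \ T) ∪ T.image (fun x => -x) ⊆ F := by
        intro x hx
        rcases Finset.mem_union.1 hx with h | h
        · exact hPF (Finset.mem_sdiff.1 h).1
        · obtain ⟨t, ht, rfl⟩ := Finset.mem_image.1 h
          exact hFneg t (hPF (hTP ht))
      have hmemB : ∀ x, x ∈ (P \ T) ∪ T.image (fun x => -x) ↔
          (x ∈ P ∧ x ∉ T) ∨ (∃ t ∈ T, x = -t) := by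
        intro x
        simp only [Finset.mem_union, Finset.mem_sdiff, Finset.mem_image]
        constructor
        · rintro (h | ⟨t, ht, rfl⟩)
          · exact Or.inl h
          · exact Or.inr ⟨t, ht, rfl⟩
        · rintro (h | ⟨t, ht, rfl⟩)
          · exact Or.inl h
          · exact Or.inr ⟨t, ht, rfl⟩
      have hdisjB : Disjoint (P \ T) (T.image (fun x => -x)) := by
        rw [Finset.disjoint_left]
        intro x hx hx'
        obtain ⟨t, ht, rfl⟩ := Finset.mem_image.1 hx'
        have h1 : 0 < -t := hPpos _ (Finset.mem_sdiff.1 hx).1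
        have h2 : 0 < t := hPpos _ (hTP ht)
        omega
      have hdisjV : Disjoint V₁ ((P \ T) ∪ T.image (fun x => -x)) := by
        rw [Finset.disjoint_left]
        intro x hx hx'
        exact hFA x (hBF hx') (hV₁A hx)
      rw [Finset.mem_coe, Finset.mem_filter, Finset.mem_powerset]
      refine ⟨?_, ?_, ?_, ?_⟩
      · intro x hx
        rcases Finset.mem_union.1 hx with h | h
        · exact hAS (hV₁A h)
        · exact hFS (hBF h)
      · rw [Finset.card_union_of_disjoint hdisjV, Finset.card_union_of_disjoint hdisjB,
          Finset.card_sdiff_of_subset hTP, Finset.card_image_of_injective _ neg_injective,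
          hV₁card, hPcard]
        have hTle : T.card ≤ P.card := Finset.card_le_card hTP
        omega
      · rw [Finset.eq_empty_iff_forall_notMem]
        intro x hx
        obtain ⟨hx1, hx2⟩ := Finset.mem_inter.1 hx
        rcases Finset.mem_union.1 hx1 with h | h
        · exact hAW x (hV₁A h) hx2
        · exact hFW x (hBF h) hx2
      · intro v hv hcontra
        have hnotW : ∀ x ∈ V₁ ∪ ((P \ T) ∪ T.image (fun x => -x)), x ∉ W := by
          intro x hx
          rcases Finset.mem_union.1 hx with h | h
          · exact hAW x (hV₁A h)
          · exact hFW x (hBF h)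
        rcases Finset.mem_union.1 hv with hvV₁ | hvB
        · exact hnotW _ hcontra (hAnegW v (hV₁A hvV₁))
        · rcases Finset.mem_union.1 hcontra with hcV₁ | hcB
          · exact hFA (-v) (hFneg v (hBF hvB)) (hV₁A hcV₁)
          · rcases (hmemB v).1 hvB with ⟨hvP, hvT⟩ | ⟨t, ht, rfl⟩
            · rcases (hmemB (-v)).1 hcB with ⟨hP', _⟩ | ⟨t, ht, hteq⟩
              · have := hPpos _ hP'
                have := hPpos _ hvP
                omega
              · have : v = t := by omega
                exact hvT (this ▸ ht)
            · rcases (hmemB (- -t)).1 hcB with ⟨hP', hT'⟩ | ⟨t', ht', hteq⟩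
              · exact hT' (by simpa using ht)
              · have h1 : 0 < t := hPpos _ (hTP ht)
                have h2 : 0 < t' := hPpos _ (hTP ht')
                omega
    · -- left inverse
      intro V hV
      simp only [Finset.mem_coe, Finset.mem_filter, Finset.mem_powerset] at hV
      obtain ⟨hVS, hVk, hVW0, hVopp⟩ := hV
      have hVW : ∀ v ∈ V, v ∉ W := by
        intro v hv hvW
        have : v ∈ V ∩ W := Finset.mem_inter.2 ⟨hv, hvW⟩
        rw [hVW0] at this
        exact absurd this (Finset.notMem_empty v)
      have hVAF : V \ A ⊆ F := by
        intro x hx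
        obtain ⟨hxV, hxA⟩ := Finset.mem_sdiff.1 hx
        rcases hSWdecomp x (hVS hxV) (hVW x hxV) with h | h
        · exact absurd h hxA
        · exact h
      dsimp only
      have hT' : (((V \ A).filter (fun x => x < 0)).image (fun x => -x)).image (fun x => -x)
          = (V \ A).filter (fun x => x < 0) := by
        rw [Finset.image_image]
        have : ((fun x : ℤ => -x) ∘ fun x : ℤ => -x) = id := by
          funext x; simp
        rw [this, Finset.image_id]
      have hPT : (V \ A).image (fun x => |x|) \ ((V \ A).filter (fun x => x < 0)).image (fun x => -x)
          = (V \ A).filter (fun x => 0 < x) := by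
        ext x
        simp only [Finset.mem_sdiff, Finset.mem_image, Finset.mem_filter]
        constructor
        · rintro ⟨⟨y, hy, rfl⟩, hnT⟩
          have hy0 := hF0 y (hVAF (Finset.mem_sdiff.2 hy))
          rcases lt_trichotomy y 0 with h | h | h
          · exact absurd ⟨y, ⟨hy, h⟩, (abs_of_neg h).symm⟩ hnT
          · exact absurd h hy0
          · rw [abs_of_pos h]; exact ⟨hy, h⟩
        · rintro ⟨hx, hxpos⟩
          refine ⟨⟨x, hx, abs_of_pos hxpos⟩, ?_⟩
          rintro ⟨y, ⟨hy, hyneg⟩, hyeq⟩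
          have : y = -x := by omega
          subst this
          exact hVopp x hx.1 hy.1
      rw [hT', hPT]
      have hsplit : (V \ A).filter (fun x => 0 < x) ∪ (V \ A).filter (fun x => x < 0) = V \ A := by
        ext x
        simp only [Finset.mem_union, Finset.mem_filter]
        constructor
        · rintro (h | h) <;> exact h.1
        · intro hx
          have hx0 := hF0 x (hVAF hx)
          rcases lt_trichotomy x 0 with h | h | h
          · exact Or.inr ⟨hx, h⟩
          · exact absurd h hx0
          · exact Or.inl ⟨hx, h⟩
      rw [hsplit]
      ext x
      simp only [Finset.mem_union, Finset.mem_inter, Finset.mem_sdiff]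
      by_cases hxA : x ∈ A <;> constructor
      · rintro (h | h)
        · exact h.1
        · exact h.1
      · intro hx; exact Or.inl ⟨hx, hxA⟩
      · rintro (h | h)
        · exact h.1
        · exact h.1
      · intro hx; exact Or.inr ⟨hx, hxA⟩
    · -- right inverse
      rintro ⟨j, V₁, P, T⟩ ha
      simp only [Finset.mem_coe, Finset.mem_sigma, Finset.mem_product, Finset.mem_powersetCard,
        Finset.mem_powerset, Finset.mem_range] at ha
      obtain ⟨hjk, ⟨hV₁A, hV₁card⟩, ⟨⟨hPPos, hPcard⟩, hTP⟩⟩ := ha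
      dsimp only
      have hPF : P ⊆ F := hPPos.trans hPosF
      have hPpos : ∀ x ∈ P, 0 < x := fun x hx => hPospos x (hPPos hx)
      have hBF : (P \ T) ∪ T.image (fun x => -x) ⊆ F := by
        intro x hx
        rcases Finset.mem_union.1 hx with h | h
        · exact hPF (Finset.mem_sdiff.1 h).1
        · obtain ⟨t, ht, rfl⟩ := Finset.mem_image.1 h
          exact hFneg t (hPF (hTP ht))
      have h1 : (V₁ ∪ ((P \ T) ∪ T.image (fun x => -x))) ∩ A = V₁ := by
        ext x
        constructor
        · intro hx
          obtain ⟨hx1, hxA⟩ := Finset.mem_inter.1 hx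
          rcases Finset.mem_union.1 hx1 with h | h
          · exact h
          · exact absurd hxA (hFA x (hBF h))
        · intro hx
          exact Finset.mem_inter.2 ⟨Finset.mem_union.2 (Or.inl hx), hV₁A hx⟩
      have h2 : (V₁ ∪ ((P \ T) ∪ T.image (fun x => -x))) \ A = (P \ T) ∪ T.image (fun x => -x) := by
        ext x
        constructor
        · intro hx
          obtain ⟨hx1, hxA⟩ := Finset.mem_sdiff.1 hx
          rcases Finset.mem_union.1 hx1 with h | h
          · exact absurd (hV₁A h) hxA
          · exact h
        · intro hx
          exact Finset.mem_sdiff.2 ⟨Finset.mem_union.2 (Or.inr hx), hFA x (hBF hx)⟩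
      have h3 : ((P \ T) ∪ T.image (fun x => -x)).image (fun x => |x|) = P := by
        rw [Finset.image_union, Finset.image_image]
        have e1 : (P \ T).image (fun x => |x|) = P \ T := by
          rw [Finset.image_congr (g := id) ?_, Finset.image_id]
          intro x hx
          exact abs_of_pos (hPpos x (Finset.mem_sdiff.1 (by exact_mod_cast hx)).1)
        have e2 : T.image ((fun x : ℤ => |x|) ∘ fun x : ℤ => -x) = T := by
          rw [Finset.image_congr (g := id) ?_, Finset.image_id]
          intro x hx
          have : (0:ℤ) < x := hPpos x (hTP (by exact_mod_cast hx))
          simp only [Function.comp_apply, abs_neg, id_eq]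
          exact abs_of_pos this
        rw [e1, e2, Finset.sdiff_union_of_subset hTP]
      have h4 : (((P \ T) ∪ T.image (fun x => -x)).filter (fun x => x < 0)).image (fun x => -x) = T := by
        have e1 : ((P \ T) ∪ T.image (fun x => -x)).filter (fun x => x < 0) = T.image (fun x => -x) := by
          ext x
          simp only [Finset.mem_filter, Finset.mem_union, Finset.mem_sdiff, Finset.mem_image]
          constructor
          · rintro ⟨h | ⟨t, ht, rfl⟩, hneg⟩
            · exact absurd (hPpos x h.1) (by omega)
            · exact ⟨t, ht, rfl⟩
          · rintro ⟨t, ht, rfl⟩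
            have : (0:ℤ) < t := hPpos t (hTP ht)
            exact ⟨Or.inr ⟨t, ht, rfl⟩, by omega⟩
        rw [e1, Finset.image_image]
        have : ((fun x : ℤ => -x) ∘ fun x : ℤ => -x) = id := by funext x; simp
        rw [this, Finset.image_id]
      rw [h2, h1, h3, h4, hV₁card]
  rw [hmain, Finset.card_sigma]
  apply Finset.sum_congr rfl
  intro j hj
  rw [Finset.card_product, Finset.card_sigma, Finset.card_powersetCard, hcardA]
  have : ∑ P ∈ Pos.powersetCard (k - j), (P.powerset).card
      = (Pos.card).choose (k - j) * 2 ^ (k - j) := by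
    rw [← Finset.card_powersetCard]
    rw [Finset.sum_congr rfl (fun P hP => ?_), Finset.sum_const, smul_eq_mul]
    rw [Finset.card_powerset, (Finset.mem_powersetCard.1 hP).2]
  rw [this, hcardPos, mul_assoc]
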